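/- arXiv:2102.09850 — 3 statements merged into one kernel-verified Lean document; each statement's English description precedes it below -/
import Mathlib

section
/- (Model Error Bound) Let X = X_1 × ⋯ × X_d be a finite factored state space with per-coordinate kernels P_i and full factored kernel P(x̄ | x, a) = ∏_{i=1}^d P_i(x̄_i | x, a). Suppose each abstraction φ_i : X → S_i is ε_i-approximately model-invariant, and let φ(x) = (φ_1(x),…,φ_d(x)). Fix a ∈ A, an abstract state s in the image of φ, and a probability distribution p on X supported on φ^{-1}(s), and define the abstract transition distribution P_φ(s, a)(x̄) = Σ_{x ∈ φ^{-1}(s)} p(x) P(x̄ | x, a). Then for every x ∈ φ^{-1}(s), Σ_{x̄ ∈ X} |P_φ(s, a)(x̄) − P(x̄ | x, a)| ≤ Σ_{i=1}^d ε_i. -/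
/-- Weierstrass: `1 - ∑ (1 - u i) ≤ ∏ u i` for `u i ∈ [0,1]`. -/
lemma weier_aux {ι : Type*} (t : Finset ι) (u : ι → ℝ)
    (h0 : ∀ i ∈ t, 0 ≤ u i) (h1 : ∀ i ∈ t, u i ≤ 1) :
    1 - ∑ i ∈ t, (1 - u i) ≤ ∏ i ∈ t, u i := by
  classical
  induction t using Finset.induction with
  | empty => simp
  | @insert b t hnotmem ih =>
    rw [Finset.sum_insert hnotmem, Finset.prod_insert hnotmem]
    have hb0 : 0 ≤ u b := h0 b (Finset.mem_insert_self b t)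
    have hb1 : u b ≤ 1 := h1 b (Finset.mem_insert_self b t)
    have hP := ih (fun i hi => h0 i (Finset.mem_insert_of_mem hi))
      (fun i hi => h1 i (Finset.mem_insert_of_mem hi))
    have hS : 0 ≤ ∑ i ∈ t, (1 - u i) :=
      Finset.sum_nonneg fun i hi => by linarith [h1 i (Finset.mem_insert_of_mem hi)]
    have hPnn : 0 ≤ ∏ i ∈ t, u i :=
      Finset.prod_nonneg fun i hi => h0 i (Finset.mem_insert_of_mem hi)
    nlinarith [mul_nonneg hb0 (sub_nonneg.mpr hP), mul_nonneg (sub_nonneg.mpr hb1) hS]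

/-- L1 distance between product distributions is at most the sum of factor L1 distances. -/
lemma l1_prod_le {d : ℕ} (Xs : Fin d → Type) [∀ j, Fintype (Xs j)]
    (f g : ∀ i, Xs i → ℝ)
    (hf0 : ∀ i v, 0 ≤ f i v) (hg0 : ∀ i v, 0 ≤ g i v)
    (hfs : ∀ i, ∑ v, f i v = 1) (hgs : ∀ i, ∑ v, g i v = 1) :
    ∑ y : ∀ j, Xs j, |(∏ i, f i (y i)) - ∏ i, g i (y i)| ≤ ∑ i, ∑ v, |f i v - g i v| := by
  classical
  set m : Fin d → ℝ := fun i => ∑ v, min (f i v) (g i v) with hm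
  have hprod : ∀ h : ∀ i, Xs i → ℝ, ∑ y : ∀ j, Xs j, ∏ i, h i (y i) = ∏ i, ∑ v, h i v := by
    intro h
    rw [Finset.prod_univ_sum]
    rw [← Fintype.piFinset_univ]
  have hmD : ∀ i, m i = 1 - (∑ v, |f i v - g i v|) / 2 := by
    intro i
    have : ∀ v, min (f i v) (g i v) = (f i v + g i v - |f i v - g i v|) / 2 := by
      intro v; rcases le_total (f i v) (g i v) with h | h
      · rw [min_eq_left h, abs_of_nonpos (by linarith)]; ring
      · rw [min_eq_right h, abs_of_nonneg (by linarith)]; ring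
    calc m i = ∑ v, (f i v + g i v - |f i v - g i v|) / 2 := by simp only [hm, this]
      _ = ((∑ v, f i v) + (∑ v, g i v) - ∑ v, |f i v - g i v|) / 2 := by
          rw [← Finset.sum_div, Finset.sum_sub_distrib, Finset.sum_add_distrib]
      _ = 1 - (∑ v, |f i v - g i v|) / 2 := by rw [hfs, hgs]; ring
  have hm0 : ∀ i, 0 ≤ m i := fun i =>
    Finset.sum_nonneg fun v _ => le_min (hf0 i v) (hg0 i v)
  have hm1 : ∀ i, m i ≤ 1 := by
    intro i; rw [← hfs i]
    exact Finset.sum_le_sum fun v _ => min_le_left _ _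
  -- pointwise bound
  have hpt : ∀ y : ∀ j, Xs j,
      |(∏ i, f i (y i)) - ∏ i, g i (y i)| ≤
        (∏ i, f i (y i)) + (∏ i, g i (y i)) - 2 * ∏ i, min (f i (y i)) (g i (y i)) := by
    intro y
    have h1 : (∏ i, min (f i (y i)) (g i (y i))) ≤ ∏ i, f i (y i) :=
      Finset.prod_le_prod (fun i _ => le_min (hf0 i _) (hg0 i _)) (fun i _ => min_le_left _ _)
    have h2 : (∏ i, min (f i (y i)) (g i (y i))) ≤ ∏ i, g i (y i) :=
      Finset.prod_le_prod (fun i _ => le_min (hf0 i _) (hg0 i _)) (fun i _ => min_le_right _ _)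
    rw [abs_sub_le_iff]; constructor <;> linarith
  calc ∑ y : ∀ j, Xs j, |(∏ i, f i (y i)) - ∏ i, g i (y i)|
      ≤ ∑ y : ∀ j, Xs j, ((∏ i, f i (y i)) + (∏ i, g i (y i))
          - 2 * ∏ i, min (f i (y i)) (g i (y i))) :=
        Finset.sum_le_sum fun y _ => hpt y
    _ = 2 - 2 * ∏ i, m i := by
        rw [Finset.sum_sub_distrib, Finset.sum_add_distrib, hprod f, hprod g, ← Finset.mul_sum,
          hprod (fun i v => min (f i v) (g i v))]
        simp only [hfs, hgs, Finset.prod_const_one]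
        norm_num
        rfl
    _ ≤ 2 - 2 * (1 - ∑ i, (1 - m i)) := by
        have := weier_aux Finset.univ m (fun i _ => hm0 i) (fun i _ => hm1 i)
        linarith
    _ = ∑ i, ∑ v, |f i v - g i v| := by
        have h2 : ∑ i, (1 - m i) = (∑ i, ∑ v, |f i v - g i v|) / 2 := by
          rw [Finset.sum_div]
          refine Finset.sum_congr rfl fun i _ => ?_
          rw [hmD i]; ring
        rw [h2]; ring

/-- Model Error Bound: If each per-coordinate abstraction `φ i` is
`ε i`-approximately model-invariant, then for any abstract state `s`, any distribution `p`
supported on `φ⁻¹(s)`, and any `x ∈ φ⁻¹(s)`, the L1 distance between the induced abstract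
transition distribution `P_φ(s, a)` and the full factored next-state distribution `P(· | x, a)`
is at most `∑ i, ε i`. -/
theorem model_error_bound
    {d : ℕ} (Xs : Fin d → Type) [∀ j, Fintype (Xs j)] [∀ j, Nonempty (Xs j)]
    (A : Type) [Fintype A] [Nonempty A]
    (Si : Fin d → Type) [∀ i, DecidableEq (Si i)]
    (P : ∀ i, (∀ j, Xs j) → A → Xs i → ℝ)
    (hP_nonneg : ∀ i x a v, 0 ≤ P i x a v)
    (hP_sum : ∀ i x a, ∑ v, P i x a v = 1)
    (ε : Fin d → ℝ)
    (φ : ∀ i, (∀ j, Xs j) → Si i)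
    (hφ : ∀ i (x₁ x₂ : ∀ j, Xs j) (a : A), φ i x₁ = φ i x₂ →
      ∑ v, |P i x₁ a v - P i x₂ a v| ≤ ε i)
    (a : A) (s : ∀ i, Si i)
    (p : (∀ j, Xs j) → ℝ)
    (hp_nonneg : ∀ x, 0 ≤ p x)
    (hp_sum : ∑ x, p x = 1)
    (hp_supp : ∀ x : ∀ j, Xs j, (fun i => φ i x) ≠ s → p x = 0)
    (hs : ∃ x : ∀ j, Xs j, (fun i => φ i x) = s) :
    ∀ x : ∀ j, Xs j, (fun i => φ i x) = s →
      ∑ xbar : ∀ j, Xs j,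
        |(∑ x' ∈ Finset.univ.filter (fun x' => (fun i => φ i x') = s),
            p x' * ∏ i, P i x' a (xbar i))
          - ∏ i, P i x a (xbar i)| ≤ ∑ i, ε i := by
  classical
  intro x hx
  set F := Finset.univ.filter (fun x' : ∀ j, Xs j => (fun i => φ i x') = s) with hF
  have hpF : ∑ x' ∈ F, p x' = 1 := by
    rw [← hp_sum]
    apply Finset.sum_subset (Finset.subset_univ F)
    intro y _ hy
    apply hp_supp
    simpa [hF] using hy
  have key : ∀ x' ∈ F, ∑ xbar : ∀ j, Xs j,
      |(∏ i, P i x' a (xbar i)) - ∏ i, P i x a (xbar i)| ≤ ∑ i, ε i := by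
    intro x' hx'
    have hφx' : (fun i => φ i x') = s := by simpa [hF] using hx'
    have hL1 := l1_prod_le Xs (fun i => P i x' a) (fun i => P i x a)
      (fun i v => hP_nonneg i x' a v) (fun i v => hP_nonneg i x a v)
      (fun i => hP_sum i x' a) (fun i => hP_sum i x a)
    refine le_trans hL1 (Finset.sum_le_sum fun i _ => hφ i x' x a ?_)
    rw [show φ i x' = s i from congrFun hφx' i, show φ i x = s i from congrFun hx i]
  calc ∑ xbar : ∀ j, Xs j,
        |(∑ x' ∈ F, p x' * ∏ i, P i x' a (xbar i)) - ∏ i, P i x a (xbar i)|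
      ≤ ∑ xbar : ∀ j, Xs j, ∑ x' ∈ F,
          p x' * |(∏ i, P i x' a (xbar i)) - ∏ i, P i x a (xbar i)| := by
        apply Finset.sum_le_sum
        intro xbar _
        have : (∑ x' ∈ F, p x' * ∏ i, P i x' a (xbar i)) - ∏ i, P i x a (xbar i)
            = ∑ x' ∈ F, p x' * ((∏ i, P i x' a (xbar i)) - ∏ i, P i x a (xbar i)) := by
          simp only [mul_sub]
          rw [Finset.sum_sub_distrib, ← Finset.sum_mul, hpF, one_mul]
        rw [this]
        refine (Finset.abs_sum_le_sum_abs _ _).trans ?_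
        refine Finset.sum_le_sum fun x' _ => ?_
        rw [abs_mul, abs_of_nonneg (hp_nonneg x')]
    _ = ∑ x' ∈ F, p x' * ∑ xbar : ∀ j, Xs j,
          |(∏ i, P i x' a (xbar i)) - ∏ i, P i x a (xbar i)| := by
        rw [Finset.sum_comm]
        exact Finset.sum_congr rfl fun x' _ => (Finset.mul_sum _ _ _).symm
    _ ≤ ∑ x' ∈ F, p x' * ∑ i, ε i := by
        apply Finset.sum_le_sum
        intro x' hx'
        exact mul_le_mul_of_nonneg_left (key x' hx') (hp_nonneg x')
    _ = ∑ i, ε i := by rw [← Finset.sum_mul, hpF, one_mul]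
end

section
/- (Value bound, first inequality) Let X and A be finite nonempty sets, P : X × A → (X → ℝ) a transition kernel (P(x' | x, a) ≥ 0, Σ_{x'} P(x' | x, a) = 1), r : X × A → ℝ a reward function, and γ ∈ (0,1). Let T be the Bellman optimality operator (TQ)(x, a) = r(x, a) + γ Σ_{x'} P(x' | x, a) max_{a'} Q(x', a'), and let Q* : X × A → ℝ satisfy Q* = T Q*. Let μ be a probability distribution on X × A, C > 0, and let D be a nonempty set of probability distributions on X × A such that: (i) for every ν ∈ D and every (x, a), ν(x, a) ≤ C · μ(x, a); and (ii) for every ν ∈ D and every function σ : X → A, the distribution ν_σ defined by ν_σ(x', a') = Σ_{(x,a)} ν(x, a) P(x' | x, a) · 1[a' = σ(x')] also belongs to D. Then for every Q : X × A → ℝ and every ν ∈ D, ‖Q − Q*‖_{2,ν} ≤ (√C / (1 − γ)) · ‖Q − TQ‖_{2,μ}. -/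
/-- The Bellman optimality operator of a finite MDP:
`(TQ)(x, a) = r(x, a) + γ Σ_{x'} P(x' | x, a) max_{a'} Q(x', a')`. -/
def bellmanOpt {X A : Type} [Fintype X] [Fintype A] [Nonempty A]
    (P : X → A → X → ℝ) (r : X → A → ℝ) (γ : ℝ) (Q : X → A → ℝ) : X → A → ℝ :=
  fun x a => r x a + γ * ∑ x', P x a x' *
    Finset.univ.sup' Finset.univ_nonempty (fun a' => Q x' a')

/-- The weighted 2-norm `‖f‖_{2,ν} = (Σ_{(x,a)} ν(x,a) f(x,a)²)^{1/2}`. -/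
noncomputable def norm2 {X A : Type} [Fintype X] [Fintype A] (ν : X × A → ℝ) (f : X → A → ℝ) : ℝ :=
  Real.sqrt (∑ p : X × A, ν p * (f p.1 p.2) ^ 2)

open Finset

lemma wCS {ι : Type} [Fintype ι] (ν g h : ι → ℝ) (hν : ∀ i, 0 ≤ ν i) :
    (∑ i, ν i * (g i * h i)) ^ 2 ≤ (∑ i, ν i * g i ^ 2) * ∑ i, ν i * h i ^ 2 := by
  apply Finset.sum_sq_le_sum_mul_sum_of_sq_eq_mul Finset.univ
    (fun i _ => mul_nonneg (hν i) (sq_nonneg _))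
    (fun i _ => mul_nonneg (hν i) (sq_nonneg _))
  intro i _; ring

lemma norm2_sq_sum {X A : Type} [Fintype X] [Fintype A] (ν : X × A → ℝ)
    (hν : ∀ p, 0 ≤ ν p) (f : X → A → ℝ) :
    norm2 ν f ^ 2 = ∑ p : X × A, ν p * (f p.1 p.2) ^ 2 := by
  apply Real.sq_sqrt
  exact Finset.sum_nonneg fun p _ => mul_nonneg (hν p) (sq_nonneg _)

lemma norm2_nonneg {X A : Type} [Fintype X] [Fintype A] (ν : X × A → ℝ) (f : X → A → ℝ) :
    0 ≤ norm2 ν f := Real.sqrt_nonneg _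

lemma norm2_mono_weight {X A : Type} [Fintype X] [Fintype A] (ν μ : X × A → ℝ) (C : ℝ)
    (hC : 0 ≤ C) (hμ : ∀ p, 0 ≤ μ p) (hle : ∀ p, ν p ≤ C * μ p) (f : X → A → ℝ) :
    norm2 ν f ≤ Real.sqrt C * norm2 μ f := by
  unfold norm2
  rw [← Real.sqrt_mul hC]
  apply Real.sqrt_le_sqrt
  rw [Finset.mul_sum]
  apply Finset.sum_le_sum
  intro p _
  rw [← mul_assoc]
  exact mul_le_mul_of_nonneg_right (hle p) (sq_nonneg _)

lemma norm2_triangle {X A : Type} [Fintype X] [Fintype A] (ν : X × A → ℝ)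
    (hν : ∀ p, 0 ≤ ν p) (g h : X → A → ℝ) :
    norm2 ν (fun x a => g x a + h x a) ≤ norm2 ν g + norm2 ν h := by
  have hSg : (0:ℝ) ≤ ∑ p : X × A, ν p * (g p.1 p.2) ^ 2 :=
    Finset.sum_nonneg fun p _ => mul_nonneg (hν p) (sq_nonneg _)
  have hSh : (0:ℝ) ≤ ∑ p : X × A, ν p * (h p.1 p.2) ^ 2 :=
    Finset.sum_nonneg fun p _ => mul_nonneg (hν p) (sq_nonneg _)
  have hcs : (∑ p : X × A, ν p * (g p.1 p.2 * h p.1 p.2)) ≤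
      Real.sqrt (∑ p : X × A, ν p * (g p.1 p.2) ^ 2) *
        Real.sqrt (∑ p : X × A, ν p * (h p.1 p.2) ^ 2) := by
    have := wCS ν (fun p : X × A => g p.1 p.2) (fun p : X × A => h p.1 p.2) hν
    calc (∑ p : X × A, ν p * (g p.1 p.2 * h p.1 p.2))
        ≤ |∑ p : X × A, ν p * (g p.1 p.2 * h p.1 p.2)| := le_abs_self _
      _ = Real.sqrt ((∑ p : X × A, ν p * (g p.1 p.2 * h p.1 p.2)) ^ 2) :=
          (Real.sqrt_sq_eq_abs _).symm
      _ ≤ Real.sqrt ((∑ p : X × A, ν p * (g p.1 p.2) ^ 2) *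
            ∑ p : X × A, ν p * (h p.1 p.2) ^ 2) := Real.sqrt_le_sqrt this
      _ = _ := Real.sqrt_mul hSg _
  unfold norm2
  rw [show (Real.sqrt (∑ p : X × A, ν p * (g p.1 p.2) ^ 2) +
      Real.sqrt (∑ p : X × A, ν p * (h p.1 p.2) ^ 2)) =
      Real.sqrt ((Real.sqrt (∑ p : X × A, ν p * (g p.1 p.2) ^ 2) +
        Real.sqrt (∑ p : X × A, ν p * (h p.1 p.2) ^ 2)) ^ 2) from
    (Real.sqrt_sq (by positivity)).symm]
  apply Real.sqrt_le_sqrt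
  have e1 : Real.sqrt (∑ p : X × A, ν p * (g p.1 p.2) ^ 2) ^ 2 = _ := Real.sq_sqrt hSg
  have e2 : Real.sqrt (∑ p : X × A, ν p * (h p.1 p.2) ^ 2) ^ 2 = _ := Real.sq_sqrt hSh
  calc ∑ p : X × A, ν p * (g p.1 p.2 + h p.1 p.2) ^ 2
      = (∑ p : X × A, ν p * (g p.1 p.2) ^ 2) +
        2 * (∑ p : X × A, ν p * (g p.1 p.2 * h p.1 p.2)) +
        (∑ p : X × A, ν p * (h p.1 p.2) ^ 2) := by
        rw [Finset.mul_sum, ← Finset.sum_add_distrib, ← Finset.sum_add_distrib]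
        apply Finset.sum_congr rfl; intro p _; ring
    _ ≤ _ := by nlinarith [hcs]

lemma sup'_abs_sub {A : Type} [Fintype A] [Nonempty A] (u v : A → ℝ) :
    |Finset.univ.sup' Finset.univ_nonempty u - Finset.univ.sup' Finset.univ_nonempty v|
      ≤ Finset.univ.sup' Finset.univ_nonempty (fun a => |u a - v a|) := by
  rw [abs_sub_le_iff]
  constructor
  · rw [sub_le_iff_le_add]
    apply Finset.sup'_le
    intro a _
    have h1 := Finset.le_sup' (f := fun a => |u a - v a|) (Finset.mem_univ a)
    have h2 : v a ≤ Finset.univ.sup' Finset.univ_nonempty v := Finset.le_sup' v (Finset.mem_univ a)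
    have := le_abs_self (u a - v a)
    linarith
  · rw [sub_le_iff_le_add]
    apply Finset.sup'_le
    intro a _
    have h1 := Finset.le_sup' (f := fun a => |u a - v a|) (Finset.mem_univ a)
    have h2 : u a ≤ Finset.univ.sup' Finset.univ_nonempty u := Finset.le_sup' u (Finset.mem_univ a)
    have := neg_abs_le (u a - v a)
    linarith

/-- Value bound, first inequality: under the concentratability assumption with
coefficient `C` for a family `D` of admissible distributions closed under one-step pushforward
by deterministic policies, for every `Q` and every `ν ∈ D`,
`‖Q − Q*‖_{2,ν} ≤ (√C / (1 − γ)) · ‖Q − TQ‖_{2,μ}`. -/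
theorem value_bound_first_inequality
    (X A : Type) [Fintype X] [Fintype A] [Nonempty X] [Nonempty A] [DecidableEq A]
    (P : X → A → X → ℝ)
    (hP_nonneg : ∀ x a x', 0 ≤ P x a x')
    (hP_sum : ∀ x a, ∑ x', P x a x' = 1)
    (r : X → A → ℝ) (γ : ℝ) (hγ0 : 0 < γ) (hγ1 : γ < 1)
    (Qstar : X → A → ℝ)
    (hQstar : ∀ x a, Qstar x a = bellmanOpt P r γ Qstar x a)
    (μ : X × A → ℝ) (hμ_nonneg : ∀ p, 0 ≤ μ p) (hμ_sum : ∑ p, μ p = 1)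
    (C : ℝ) (hC : 0 < C)
    (D : Set (X × A → ℝ)) (hD_ne : D.Nonempty)
    (hD_prob : ∀ ν ∈ D, (∀ p, 0 ≤ ν p) ∧ ∑ p, ν p = 1)
    (hD_conc : ∀ ν ∈ D, ∀ p, ν p ≤ C * μ p)
    (hD_closed : ∀ ν ∈ D, ∀ σ : X → A,
      (fun p : X × A => ∑ q : X × A,
        ν q * P q.1 q.2 p.1 * (if p.2 = σ p.1 then (1 : ℝ) else 0)) ∈ D) :
    ∀ (Q : X → A → ℝ) (ν : X × A → ℝ), ν ∈ D →
      norm2 ν (fun x a => Q x a - Qstar x a) ≤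
        (Real.sqrt C / (1 - γ)) *
          norm2 μ (fun x a => Q x a - bellmanOpt P r γ Q x a) := by
  intro Q ν hν
  set f : X → A → ℝ := fun x a => Q x a - Qstar x a with hf
  set ε : ℝ := norm2 μ (fun x a => Q x a - bellmanOpt P r γ Q x a) with hε
  have hεnn : 0 ≤ ε := norm2_nonneg _ _
  -- choose argmax policy σ
  have hσex : ∀ x : X, ∃ a ∈ (Finset.univ : Finset A),
      Finset.univ.sup' Finset.univ_nonempty (fun a' => |f x a'|) = |f x a| := fun x =>
    Finset.exists_mem_eq_sup' Finset.univ_nonempty _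
  choose σ hσmem hσeq using hσex
  -- key step: for every ν' ∈ D there is ν'' ∈ D with the one-step bound
  have key : ∀ ν' ∈ D, ∃ ν'' ∈ D,
      norm2 ν' f ≤ Real.sqrt C * ε + γ * norm2 ν'' f := by
    intro ν' hν'
    obtain ⟨hν'nn, _⟩ := hD_prob ν' hν'
    refine ⟨_, hD_closed ν' hν' σ, ?_⟩
    set ν'' : X × A → ℝ := fun p : X × A => ∑ q : X × A,
        ν' q * P q.1 q.2 p.1 * (if p.2 = σ p.1 then (1 : ℝ) else 0) with hν''
    obtain ⟨hν''nn, _⟩ := hD_prob ν'' (hD_closed ν' hν' σ)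
    -- pointwise contraction bound, squared
    have hpt : ∀ p : X × A,
        (bellmanOpt P r γ Q p.1 p.2 - bellmanOpt P r γ Qstar p.1 p.2) ^ 2 ≤
          γ ^ 2 * ∑ x', P p.1 p.2 x' * (f x' (σ x')) ^ 2 := by
      intro p
      have habs : |bellmanOpt P r γ Q p.1 p.2 - bellmanOpt P r γ Qstar p.1 p.2| ≤
          γ * ∑ x', P p.1 p.2 x' * |f x' (σ x')| := by
        have hd : bellmanOpt P r γ Q p.1 p.2 - bellmanOpt P r γ Qstar p.1 p.2 =
            γ * ∑ x', P p.1 p.2 x' *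
              (Finset.univ.sup' Finset.univ_nonempty (fun a' => Q x' a') -
               Finset.univ.sup' Finset.univ_nonempty (fun a' => Qstar x' a')) := by
          unfold bellmanOpt
          rw [Finset.mul_sum, Finset.mul_sum, Finset.mul_sum,
            add_sub_add_left_eq_sub, ← Finset.sum_sub_distrib]
          apply Finset.sum_congr rfl
          intro x' _
          ring
        rw [hd, abs_mul, abs_of_pos hγ0]
        apply mul_le_mul_of_nonneg_left _ hγ0.le
        calc |∑ x', P p.1 p.2 x' *
              (Finset.univ.sup' Finset.univ_nonempty (fun a' => Q x' a') -
               Finset.univ.sup' Finset.univ_nonempty (fun a' => Qstar x' a'))|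
            ≤ ∑ x', |P p.1 p.2 x' *
              (Finset.univ.sup' Finset.univ_nonempty (fun a' => Q x' a') -
               Finset.univ.sup' Finset.univ_nonempty (fun a' => Qstar x' a'))| :=
              Finset.abs_sum_le_sum_abs _ _
          _ ≤ ∑ x', P p.1 p.2 x' * |f x' (σ x')| := by
              apply Finset.sum_le_sum
              intro x' _
              rw [abs_mul, abs_of_nonneg (hP_nonneg _ _ _)]
              apply mul_le_mul_of_nonneg_left _ (hP_nonneg _ _ _)
              calc _ ≤ Finset.univ.sup' Finset.univ_nonempty (fun a' => |Q x' a' - Qstar x' a'|) :=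
                    sup'_abs_sub _ _
                _ = |f x' (σ x')| := hσeq x'
      have hsq : (∑ x', P p.1 p.2 x' * |f x' (σ x')|) ^ 2 ≤
          ∑ x', P p.1 p.2 x' * (f x' (σ x')) ^ 2 := by
        have := Finset.sum_sq_le_sum_mul_sum_of_sq_eq_mul Finset.univ
          (r := fun x' => P p.1 p.2 x' * |f x' (σ x')|)
          (f := fun x' => P p.1 p.2 x')
          (g := fun x' => P p.1 p.2 x' * (f x' (σ x')) ^ 2)
          (fun x' _ => hP_nonneg _ _ _)
          (fun x' _ => mul_nonneg (hP_nonneg _ _ _) (sq_nonneg _))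
          (fun x' _ => by rw [mul_pow, sq_abs]; ring)
        rwa [hP_sum, one_mul] at this
      calc (bellmanOpt P r γ Q p.1 p.2 - bellmanOpt P r γ Qstar p.1 p.2) ^ 2
          = |bellmanOpt P r γ Q p.1 p.2 - bellmanOpt P r γ Qstar p.1 p.2| ^ 2 := (sq_abs _).symm
        _ ≤ (γ * ∑ x', P p.1 p.2 x' * |f x' (σ x')|) ^ 2 := by
            apply pow_le_pow_left₀ (abs_nonneg _) habs
        _ = γ ^ 2 * (∑ x', P p.1 p.2 x' * |f x' (σ x')|) ^ 2 := by ring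
        _ ≤ γ ^ 2 * ∑ x', P p.1 p.2 x' * (f x' (σ x')) ^ 2 :=
            mul_le_mul_of_nonneg_left hsq (sq_nonneg _)
    -- rewrite the ν'' weighted sum
    have hrew : ∑ p : X × A, ν'' p * (f p.1 p.2) ^ 2 =
        ∑ q : X × A, ∑ x', ν' q * P q.1 q.2 x' * (f x' (σ x')) ^ 2 := by
      rw [hν'']
      simp only [Finset.sum_mul]
      rw [Finset.sum_comm]
      apply Finset.sum_congr rfl
      intro q _
      rw [Fintype.sum_prod_type]
      apply Finset.sum_congr rfl
      intro x' _
      simp [mul_ite, ite_mul, mul_one, mul_zero, zero_mul, Finset.sum_ite_eq',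
        Finset.mem_univ]
    -- contraction in norm
    have hcontr : norm2 ν' (fun x a => bellmanOpt P r γ Q x a - bellmanOpt P r γ Qstar x a)
        ≤ γ * norm2 ν'' f := by
      unfold norm2
      rw [show γ * Real.sqrt (∑ p : X × A, ν'' p * (f p.1 p.2) ^ 2) =
          Real.sqrt (γ ^ 2 * ∑ p : X × A, ν'' p * (f p.1 p.2) ^ 2) by
        rw [Real.sqrt_mul (sq_nonneg γ), Real.sqrt_sq hγ0.le]]
      apply Real.sqrt_le_sqrt
      calc ∑ p : X × A, ν' p * (bellmanOpt P r γ Q p.1 p.2 - bellmanOpt P r γ Qstar p.1 p.2) ^ 2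
          ≤ ∑ p : X × A, ν' p * (γ ^ 2 * ∑ x', P p.1 p.2 x' * (f x' (σ x')) ^ 2) := by
            apply Finset.sum_le_sum
            intro p _
            exact mul_le_mul_of_nonneg_left (hpt p) (hν'nn p)
        _ = γ ^ 2 * ∑ q : X × A, ∑ x', ν' q * P q.1 q.2 x' * (f x' (σ x')) ^ 2 := by
            rw [Finset.mul_sum]
            apply Finset.sum_congr rfl
            intro q _
            rw [Finset.mul_sum, Finset.mul_sum, Finset.mul_sum]
            apply Finset.sum_congr rfl
            intro x' _
            ring
        _ = γ ^ 2 * ∑ p : X × A, ν'' p * (f p.1 p.2) ^ 2 := by rw [hrew]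
    -- triangle inequality
    have feq : f = fun x a => (Q x a - bellmanOpt P r γ Q x a) +
        (bellmanOpt P r γ Q x a - bellmanOpt P r γ Qstar x a) := by
      funext x a
      rw [hf]
      simp only
      rw [hQstar x a]
      ring
    calc norm2 ν' f
        ≤ norm2 ν' (fun x a => Q x a - bellmanOpt P r γ Q x a) +
          norm2 ν' (fun x a => bellmanOpt P r γ Q x a - bellmanOpt P r γ Qstar x a) := by
          rw [feq]
          exact norm2_triangle ν' hν'nn _ _
      _ ≤ Real.sqrt C * ε + γ * norm2 ν'' f := by
          apply add_le_add _ hcontr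
          exact norm2_mono_weight ν' μ C hC.le hμ_nonneg (hD_conc ν' hν') _
  -- sup argument
  set S : Set ℝ := (fun ν' => norm2 ν' f) '' D with hS
  have hSne : S.Nonempty := hD_ne.image _
  have hSbdd : BddAbove S := by
    refine ⟨Real.sqrt C * norm2 μ f, ?_⟩
    rintro s ⟨ν', hν', rfl⟩
    exact norm2_mono_weight ν' μ C hC.le hμ_nonneg (hD_conc ν' hν') _
  set M : ℝ := sSup S with hM
  have hMself : ∀ ν' ∈ D, norm2 ν' f ≤ M :=
    fun ν' hν' => le_csSup hSbdd ⟨ν', hν', rfl⟩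
  have hMle : M ≤ Real.sqrt C * ε + γ * M := by
    apply csSup_le hSne
    rintro s ⟨ν', hν', rfl⟩
    obtain ⟨ν'', hν'', hle⟩ := key ν' hν'
    calc norm2 ν' f ≤ Real.sqrt C * ε + γ * norm2 ν'' f := hle
      _ ≤ Real.sqrt C * ε + γ * M := by
          apply add_le_add_right
          exact mul_le_mul_of_nonneg_left (hMself ν'' hν'') hγ0.le
  have hMfin : M ≤ (Real.sqrt C / (1 - γ)) * ε := by
    have h1γ : 0 < 1 - γ := by linarith
    rw [div_mul_eq_mul_div, le_div_iff₀ h1γ]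
    nlinarith [hMle]
  exact (hMself ν hν).trans hMfin
end

section
/- (Combined value bound) Under the combined hypotheses: a finite MDP (X, A, P, r, γ) with Bellman optimality operator T and fixed point Q* = T Q*; an abstract MDP (S, A, P_φ, R_φ, γ) with surjective φ : X → S, abstract fixed point Q*_φ = T_φ Q*_φ, rewards 0 ≤ R_φ ≤ R_max, reward consistency |R_φ(φ(x), a) − r(x, a)| ≤ ε_R, and transition consistency Σ_{s'} |P_φ(s' | φ(x), a) − Σ_{x' ∈ φ^{-1}(s')} P(x' | x, a)| ≤ ε_P for all x, a; a probability distribution μ on X × A, C > 0, and a nonempty set D of probability distributions on X × A such that every ν ∈ D satisfies ν(x, a) ≤ C · μ(x, a) pointwise and such that for every ν ∈ D and every σ : X → A the distribution ν_σ(x', a') = Σ_{(x,a)} ν(x, a) P(x' | x, a) · 1[a' = σ(x')] belongs to D — then for every ν ∈ D, the lift [Q*_φ]_M(x, a) = Q*_φ(φ(x), a) satisfies ‖[Q*_φ]_M − Q*‖_{2,ν} ≤ (√C / (1 − γ)) · (ε_R + γ · ε_P · R_max / (2(1 − γ))). -/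
lemma abs_sup'_sub_sup'_le' {α : Type*} (s : Finset α) (hs : s.Nonempty)
    (f g : α → ℝ) :
    |s.sup' hs f - s.sup' hs g| ≤ s.sup' hs (fun a => |f a - g a|) := by
  rw [abs_sub_le_iff]
  constructor
  · rw [sub_le_iff_le_add]
    apply Finset.sup'_le
    intro a ha
    have h1 : f a - g a ≤ s.sup' hs (fun a => |f a - g a|) :=
      (le_abs_self _).trans (Finset.le_sup' (fun a => |f a - g a|) ha)
    have h2 : g a ≤ s.sup' hs g := Finset.le_sup' g ha
    linarith
  · rw [sub_le_iff_le_add]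
    apply Finset.sup'_le
    intro a ha
    have h1 : -(f a - g a) ≤ s.sup' hs (fun a => |f a - g a|) :=
      (neg_le_abs _).trans (Finset.le_sup' (fun a => |f a - g a|) ha)
    have h2 : f a ≤ s.sup' hs f := Finset.le_sup' f ha
    linarith

/-- Combined value bound: under reward/transition consistency of the abstract
MDP and the concentratability assumption, for every admissible `ν ∈ D`,
`‖[Q*_φ]_M − Q*‖_{2,ν} ≤ (√C / (1 − γ)) · (ε_R + γ ε_P R_max / (2(1 − γ)))`. -/
theorem combined_value_bound
    (X A S : Type) [Fintype X] [Fintype A] [Fintype S]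
    [Nonempty X] [Nonempty A] [Nonempty S] [DecidableEq S] [DecidableEq A]
    (P : X → A → X → ℝ)
    (hP_nonneg : ∀ x a x', 0 ≤ P x a x')
    (hP_sum : ∀ x a, ∑ x', P x a x' = 1)
    (r : X → A → ℝ) (γ : ℝ) (hγ0 : 0 < γ) (hγ1 : γ < 1)
    (Qstar : X → A → ℝ)
    (hQstar : ∀ x a, Qstar x a = bellmanOpt P r γ Qstar x a)
    (φ : X → S) (hφ_surj : Function.Surjective φ)
    (Pφ : S → A → S → ℝ)
    (hPφ_nonneg : ∀ s a s', 0 ≤ Pφ s a s')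
    (hPφ_sum : ∀ s a, ∑ s', Pφ s a s' = 1)
    (Rφ : S → A → ℝ) (Rmax : ℝ)
    (hRφ : ∀ s a, 0 ≤ Rφ s a ∧ Rφ s a ≤ Rmax)
    (Qφ : S → A → ℝ)
    (hQφ : ∀ s a, Qφ s a = bellmanOpt Pφ Rφ γ Qφ s a)
    (εR εP : ℝ)
    (hreward : ∀ x a, |Rφ (φ x) a - r x a| ≤ εR)
    (htrans : ∀ x a, ∑ s', |Pφ (φ x) a s'
        - ∑ x' ∈ Finset.univ.filter (fun x' => φ x' = s'), P x a x'| ≤ εP)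
    (μ : X × A → ℝ) (hμ_nonneg : ∀ p, 0 ≤ μ p) (hμ_sum : ∑ p, μ p = 1)
    (C : ℝ) (hC : 0 < C)
    (D : Set (X × A → ℝ)) (hD_ne : D.Nonempty)
    (hD_prob : ∀ ν ∈ D, (∀ p, 0 ≤ ν p) ∧ ∑ p, ν p = 1)
    (hD_conc : ∀ ν ∈ D, ∀ p, ν p ≤ C * μ p)
    (hD_closed : ∀ ν ∈ D, ∀ σ : X → A,
      (fun p : X × A => ∑ q : X × A,
        ν q * P q.1 q.2 p.1 * (if p.2 = σ p.1 then (1 : ℝ) else 0)) ∈ D) :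
    ∀ ν ∈ D,
      norm2 ν (fun x a => Qφ (φ x) a - Qstar x a) ≤
        (Real.sqrt C / (1 - γ)) * (εR + γ * εP * Rmax / (2 * (1 - γ))) := by
  intro ν hν
  have h1γ : (0:ℝ) < 1 - γ := by linarith
  -- basic nonnegativity facts
  obtain ⟨x₀⟩ := ‹Nonempty X›
  obtain ⟨a₀⟩ := ‹Nonempty A›
  have hεR : 0 ≤ εR := le_trans (abs_nonneg _) (hreward x₀ a₀)
  have hεP : 0 ≤ εP := le_trans (Finset.sum_nonneg fun _ _ => abs_nonneg _) (htrans x₀ a₀)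
  have hRmax : 0 ≤ Rmax := le_trans (hRφ (φ x₀) a₀).1 (hRφ (φ x₀) a₀).2
  -- value functions
  set Vφ : S → ℝ := fun s => Finset.univ.sup' Finset.univ_nonempty (fun a => Qφ s a) with hVφ
  set Vstar : X → ℝ := fun x => Finset.univ.sup' Finset.univ_nonempty (fun a => Qstar x a)
    with hVstar
  -- bounds on Qφ
  have hQub : ∀ s a, Qφ s a ≤ Rmax / (1 - γ) := by
    obtain ⟨p, _, hp⟩ := Finset.exists_mem_eq_sup' (Finset.univ_nonempty (α := S × A))
      (fun p : S × A => Qφ p.1 p.2)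
    set M := Finset.univ.sup' Finset.univ_nonempty (fun p : S × A => Qφ p.1 p.2) with hM
    have hle : ∀ s a, Qφ s a ≤ M := fun s a =>
      Finset.le_sup' (fun p : S × A => Qφ p.1 p.2) (Finset.mem_univ (s, a))
    have hMle : M ≤ Rmax / (1 - γ) := by
      have h1 : M ≤ Rmax + γ * M := by
        have hsum : ∑ s', Pφ p.1 p.2 s' * Finset.univ.sup' Finset.univ_nonempty
            (fun a' => Qφ s' a') ≤ ∑ s', Pφ p.1 p.2 s' * M := by
          apply Finset.sum_le_sum
          intro s' _
          exact mul_le_mul_of_nonneg_left (Finset.sup'_le _ _ fun a' _ => hle s' a')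
            (hPφ_nonneg _ _ _)
        have heq : ∑ s', Pφ p.1 p.2 s' * M = M := by
          rw [← Finset.sum_mul, hPφ_sum, one_mul]
        have hQeq := hQφ p.1 p.2
        rw [bellmanOpt] at hQeq
        have hγs := mul_le_mul_of_nonneg_left (hsum.trans_eq heq) hγ0.le
        have := (hRφ p.1 p.2).2
        linarith [hp]
      rw [le_div_iff₀ h1γ]; nlinarith
    exact fun s a => (hle s a).trans hMle
  have hQlb : ∀ s a, 0 ≤ Qφ s a := by
    obtain ⟨p, _, hp⟩ := Finset.exists_mem_eq_inf' (Finset.univ_nonempty (α := S × A))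
      (fun p : S × A => Qφ p.1 p.2)
    set m := Finset.univ.inf' Finset.univ_nonempty (fun p : S × A => Qφ p.1 p.2) with hm
    have hle : ∀ s a, m ≤ Qφ s a := fun s a =>
      Finset.inf'_le (fun p : S × A => Qφ p.1 p.2) (Finset.mem_univ (s, a))
    have hmle : 0 ≤ m := by
      have h1 : γ * m ≤ m := by
        have hsum : ∑ s', Pφ p.1 p.2 s' * m ≤ ∑ s', Pφ p.1 p.2 s' * Finset.univ.sup'
            Finset.univ_nonempty (fun a' => Qφ s' a') := by
          apply Finset.sum_le_sum
          intro s' _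
          exact mul_le_mul_of_nonneg_left
            ((hle s' a₀).trans (Finset.le_sup' (fun a' => Qφ s' a') (Finset.mem_univ a₀)))
            (hPφ_nonneg _ _ _)
        have heq : ∑ s', Pφ p.1 p.2 s' * m = m := by
          rw [← Finset.sum_mul, hPφ_sum, one_mul]
        have hQeq := hQφ p.1 p.2
        rw [bellmanOpt] at hQeq
        have hγs := mul_le_mul_of_nonneg_left (heq.symm.trans_le hsum) hγ0.le
        have := (hRφ p.1 p.2).1
        linarith [hp]
      nlinarith
    exact fun s a => hmle.trans (hle s a)
  have hVφub : ∀ s, Vφ s ≤ Rmax / (1 - γ) := fun s =>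
    Finset.sup'_le _ _ fun a _ => hQub s a
  have hVφlb : ∀ s, 0 ≤ Vφ s := fun s =>
    (hQlb s a₀).trans (Finset.le_sup' (fun a => Qφ s a) (Finset.mem_univ a₀))
  -- the error function and its sup-norm
  set E := Finset.univ.sup' Finset.univ_nonempty
    (fun p : X × A => |Qφ (φ p.1) p.2 - Qstar p.1 p.2|) with hE
  have hEpt : ∀ x a, |Qφ (φ x) a - Qstar x a| ≤ E := fun x a =>
    Finset.le_sup' (fun p : X × A => |Qφ (φ p.1) p.2 - Qstar p.1 p.2|)
      (Finset.mem_univ (x, a))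
  have hEnonneg : 0 ≤ E := (abs_nonneg _).trans (hEpt x₀ a₀)
  set c := Rmax / (2 * (1 - γ)) with hc
  have hcnonneg : 0 ≤ c := div_nonneg hRmax (by linarith)
  have hVc : ∀ s, |Vφ s - c| ≤ c := by
    intro s
    rw [abs_sub_le_iff]
    constructor
    · have := hVφub s
      have h2 : Rmax / (1 - γ) = 2 * c := by
        rw [hc]; field_simp
      linarith
    · have := hVφlb s
      linarith
  -- pointwise recursive bound
  have hkey : ∀ x a, |Qφ (φ x) a - Qstar x a| ≤ εR + γ * (εP * c + E) := by
    intro x a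
    have hfib : ∑ s', (∑ x' ∈ Finset.univ.filter (fun x' => φ x' = s'), P x a x') * Vφ s'
        = ∑ x', P x a x' * Vφ (φ x') := by
      rw [← Finset.sum_fiberwise (g := φ) (f := fun x' => P x a x' * Vφ (φ x'))]
      apply Finset.sum_congr rfl
      intro s' _
      rw [Finset.sum_mul]
      apply Finset.sum_congr rfl
      intro x' hx'
      rw [Finset.mem_filter] at hx'
      rw [hx'.2]
    have hdiff : Qφ (φ x) a - Qstar x a
        = (Rφ (φ x) a - r x a)
          + γ * (∑ s', (Pφ (φ x) a s'
              - ∑ x' ∈ Finset.univ.filter (fun x' => φ x' = s'), P x a x') * (Vφ s' - c))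
          + γ * (∑ x', P x a x' * (Vφ (φ x') - Vstar x')) := by
      rw [hQφ (φ x) a, hQstar x a, bellmanOpt, bellmanOpt]
      have hz : ∑ s', (Pφ (φ x) a s'
          - ∑ x' ∈ Finset.univ.filter (fun x' => φ x' = s'), P x a x') * c
          = 0 := by
        rw [← Finset.sum_mul]
        have : ∑ s', (Pφ (φ x) a s'
            - ∑ x' ∈ Finset.univ.filter (fun x' => φ x' = s'), P x a x') = 0 := by
          rw [Finset.sum_sub_distrib, hPφ_sum,
            Finset.sum_fiberwise (g := φ) (f := fun x' => P x a x'), hP_sum]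
          ring
        rw [this, zero_mul]
      have expand : ∑ s', (Pφ (φ x) a s'
            - ∑ x' ∈ Finset.univ.filter (fun x' => φ x' = s'), P x a x') * (Vφ s' - c)
          = ∑ s', Pφ (φ x) a s' * Vφ s' - ∑ x', P x a x' * Vφ (φ x') := by
        have : ∑ s', (Pφ (φ x) a s'
              - ∑ x' ∈ Finset.univ.filter (fun x' => φ x' = s'), P x a x') * (Vφ s' - c)
            = (∑ s', (Pφ (φ x) a s'
              - ∑ x' ∈ Finset.univ.filter (fun x' => φ x' = s'), P x a x') * Vφ s')
              - ∑ s', (Pφ (φ x) a s'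
              - ∑ x' ∈ Finset.univ.filter (fun x' => φ x' = s'), P x a x') * c := by
          rw [← Finset.sum_sub_distrib]
          apply Finset.sum_congr rfl
          intro s' _; ring
        rw [this, hz, sub_zero, ← hfib, ← Finset.sum_sub_distrib]
        apply Finset.sum_congr rfl
        intro s' _; ring
      rw [expand]
      have h3 : ∑ x', P x a x' * (Vφ (φ x') - Vstar x')
          = ∑ x', P x a x' * Vφ (φ x') - ∑ x', P x a x' * Vstar x' := by
        rw [← Finset.sum_sub_distrib]
        apply Finset.sum_congr rfl
        intro x' _; ring
      rw [h3]
      simp only [hVφ, hVstar]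
      ring
    rw [hdiff]
    have b1 : |Rφ (φ x) a - r x a| ≤ εR := hreward x a
    have b2 : |∑ s', (Pφ (φ x) a s'
        - ∑ x' ∈ Finset.univ.filter (fun x' => φ x' = s'), P x a x') * (Vφ s' - c)|
        ≤ εP * c := by
      calc |∑ s', (Pφ (φ x) a s'
            - ∑ x' ∈ Finset.univ.filter (fun x' => φ x' = s'), P x a x') * (Vφ s' - c)|
          ≤ ∑ s', |(Pφ (φ x) a s'
            - ∑ x' ∈ Finset.univ.filter (fun x' => φ x' = s'), P x a x') * (Vφ s' - c)| :=
            Finset.abs_sum_le_sum_abs _ _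
        _ ≤ ∑ s', |Pφ (φ x) a s'
            - ∑ x' ∈ Finset.univ.filter (fun x' => φ x' = s'), P x a x'| * c := by
            apply Finset.sum_le_sum
            intro s' _
            rw [abs_mul]
            exact mul_le_mul_of_nonneg_left (hVc s') (abs_nonneg _)
        _ = (∑ s', |Pφ (φ x) a s'
            - ∑ x' ∈ Finset.univ.filter (fun x' => φ x' = s'), P x a x'|) * c := by
            rw [Finset.sum_mul]
        _ ≤ εP * c := mul_le_mul_of_nonneg_right (htrans x a) hcnonneg
    have b3 : |∑ x', P x a x' * (Vφ (φ x') - Vstar x')| ≤ E := by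
      calc |∑ x', P x a x' * (Vφ (φ x') - Vstar x')|
          ≤ ∑ x', |P x a x' * (Vφ (φ x') - Vstar x')| := Finset.abs_sum_le_sum_abs _ _
        _ ≤ ∑ x', P x a x' * E := by
            apply Finset.sum_le_sum
            intro x' _
            rw [abs_mul, abs_of_nonneg (hP_nonneg x a x')]
            apply mul_le_mul_of_nonneg_left _ (hP_nonneg x a x')
            calc |Vφ (φ x') - Vstar x'|
                ≤ Finset.univ.sup' Finset.univ_nonempty
                    (fun a' => |Qφ (φ x') a' - Qstar x' a'|) :=
                  abs_sup'_sub_sup'_le' _ _ _ _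
              _ ≤ E := Finset.sup'_le _ _ fun a' _ => hEpt x' a'
        _ = E := by rw [← Finset.sum_mul, hP_sum, one_mul]
    calc |Rφ (φ x) a - r x a
          + γ * (∑ s', (Pφ (φ x) a s'
              - ∑ x' ∈ Finset.univ.filter (fun x' => φ x' = s'), P x a x') * (Vφ s' - c))
          + γ * (∑ x', P x a x' * (Vφ (φ x') - Vstar x'))|
        ≤ |Rφ (φ x) a - r x a|
          + |γ * (∑ s', (Pφ (φ x) a s'
              - ∑ x' ∈ Finset.univ.filter (fun x' => φ x' = s'), P x a x') * (Vφ s' - c))|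
          + |γ * (∑ x', P x a x' * (Vφ (φ x') - Vstar x'))| := by
          exact (abs_add_le _ _).trans (by gcongr; exact abs_add_le _ _)
      _ ≤ εR + γ * (εP * c) + γ * E := by
          rw [abs_mul, abs_mul, abs_of_pos hγ0]
          gcongr
      _ = εR + γ * (εP * c + E) := by ring
  -- sup-norm bound
  have hEbound : E ≤ (εR + γ * (εP * c)) / (1 - γ) := by
    have : E ≤ εR + γ * (εP * c + E) := by
      obtain ⟨p, _, hp⟩ := Finset.exists_mem_eq_sup' (Finset.univ_nonempty (α := X × A))
        (fun p : X × A => |Qφ (φ p.1) p.2 - Qstar p.1 p.2|)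
      exact (hE.trans hp).trans_le (hkey p.1 p.2)
    rw [le_div_iff₀ h1γ]; nlinarith
  -- C ≥ 1
  have hC1 : (1:ℝ) ≤ C := by
    have h1 : ∑ p, ν p ≤ ∑ p, C * μ p := Finset.sum_le_sum fun p _ => hD_conc ν hν p
    rw [(hD_prob ν hν).2, ← Finset.mul_sum, hμ_sum, mul_one] at h1
    exact h1
  have hsC : (1:ℝ) ≤ Real.sqrt C := by
    rw [show (1:ℝ) = Real.sqrt 1 from (Real.sqrt_one).symm]
    exact Real.sqrt_le_sqrt hC1
  -- norm2 ≤ E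
  have hn2 : norm2 ν (fun x a => Qφ (φ x) a - Qstar x a) ≤ E := by
    rw [norm2]
    have : ∑ p : X × A, ν p * (Qφ (φ p.1) p.2 - Qstar p.1 p.2) ^ 2 ≤ E ^ 2 := by
      calc ∑ p : X × A, ν p * (Qφ (φ p.1) p.2 - Qstar p.1 p.2) ^ 2
          ≤ ∑ p : X × A, ν p * E ^ 2 := by
            apply Finset.sum_le_sum
            intro p _
            apply mul_le_mul_of_nonneg_left _ ((hD_prob ν hν).1 p)
            rw [← sq_abs]
            exact pow_le_pow_left₀ (abs_nonneg _) (hEpt p.1 p.2) 2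
        _ = E ^ 2 := by rw [← Finset.sum_mul, (hD_prob ν hν).2, one_mul]
    calc Real.sqrt (∑ p : X × A, ν p * (Qφ (φ p.1) p.2 - Qstar p.1 p.2) ^ 2)
        ≤ Real.sqrt (E ^ 2) := Real.sqrt_le_sqrt this
      _ = E := by rw [Real.sqrt_sq hEnonneg]
  -- finish
  have hfin : (εR + γ * (εP * c)) / (1 - γ)
      ≤ (Real.sqrt C / (1 - γ)) * (εR + γ * εP * Rmax / (2 * (1 - γ))) := by
    have heq : εR + γ * (εP * c) = εR + γ * εP * Rmax / (2 * (1 - γ)) := by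
      rw [hc]; ring
    have hnum : 0 ≤ εR + γ * εP * Rmax / (2 * (1 - γ)) :=
      add_nonneg hεR (div_nonneg (mul_nonneg (mul_nonneg hγ0.le hεP) hRmax) (by linarith))
    rw [heq, div_mul_eq_mul_div]
    exact (div_le_div_iff_of_pos_right h1γ).mpr (le_mul_of_one_le_left hnum hsC)
  exact hn2.trans (hEbound.trans hfin)
end
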